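/- arXiv:2204.04996 — 6 statements merged into one kernel-verified Lean document; each statement's English description precedes it below -/
import Mathlib

section
/- Let p and q be orthogonal pure imaginary octonions. Then the left multiplication operators satisfy \(L_p \circ L_q = -L_q \circ L_p\) as linear maps on the octonions. -/
noncomputable section
open Quaternion

/-- The octonions, as the Cayley–Dickson double of the real quaternions. -/
@[ext] structure Oct : Type where
  x : ℍ[ℝ]
  y : ℍ[ℝ]

namespace Oct

instance : Zero Oct := ⟨⟨0, 0⟩⟩
instance : One Oct := ⟨⟨1, 0⟩⟩
instance : Add Oct := ⟨fun a b => ⟨a.x + b.x, a.y + b.y⟩⟩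
instance : Neg Oct := ⟨fun a => ⟨-a.x, -a.y⟩⟩
instance : Sub Oct := ⟨fun a b => ⟨a.x - b.x, a.y - b.y⟩⟩
instance : SMul ℝ Oct := ⟨fun r a => ⟨r • a.x, r • a.y⟩⟩
/-- Cayley–Dickson multiplication. -/
instance : Mul Oct := ⟨fun a b => ⟨a.x * b.x - star b.y * a.y, b.y * a.x + a.y * star b.x⟩⟩

@[simp] lemma zero_x : (0 : Oct).x = 0 := rfl
@[simp] lemma zero_y : (0 : Oct).y = 0 := rfl
@[simp] lemma one_x : (1 : Oct).x = 1 := rfl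
@[simp] lemma one_y : (1 : Oct).y = 0 := rfl
@[simp] lemma add_x (a b : Oct) : (a + b).x = a.x + b.x := rfl
@[simp] lemma add_y (a b : Oct) : (a + b).y = a.y + b.y := rfl
@[simp] lemma neg_x (a : Oct) : (-a).x = -a.x := rfl
@[simp] lemma neg_y (a : Oct) : (-a).y = -a.y := rfl
@[simp] lemma sub_x (a b : Oct) : (a - b).x = a.x - b.x := rfl
@[simp] lemma sub_y (a b : Oct) : (a - b).y = a.y - b.y := rfl
@[simp] lemma smul_x (r : ℝ) (a : Oct) : (r • a).x = r • a.x := rfl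
@[simp] lemma smul_y (r : ℝ) (a : Oct) : (r • a).y = r • a.y := rfl
@[simp] lemma mul_x (a b : Oct) : (a * b).x = a.x * b.x - star b.y * a.y := rfl
@[simp] lemma mul_y (a b : Oct) : (a * b).y = b.y * a.x + a.y * star b.x := rfl

instance : AddCommGroup Oct where
  add_assoc a b c := by ext <;> simp [add_assoc]
  zero_add a := by ext <;> simp
  add_zero a := by ext <;> simp
  add_comm a b := by ext <;> simp [add_comm]
  neg_add_cancel a := by ext <;> simp
  sub_eq_add_neg a b := by ext <;> simp [sub_eq_add_neg]
  nsmul := nsmulRec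
  zsmul := zsmulRec

instance : Module ℝ Oct where
  one_smul a := by ext <;> simp
  mul_smul r s a := by ext <;> simp [mul_smul]
  smul_zero r := by ext <;> simp
  smul_add r a b := by ext <;> simp
  add_smul r s a := by ext <;> simp [add_smul]
  zero_smul a := by ext <;> simp

/-- Octonion conjugation. -/
def conj (a : Oct) : Oct := ⟨star a.x, -a.y⟩

/-- Real part. -/
def re (a : Oct) : ℝ := a.x.re

/-- The inner product `⟨a,b⟩ = Re (a * conj b)`. -/
def inner (a b : Oct) : ℝ := re (a * conj b)

/-- Left multiplication. -/
def L (a : Oct) : Oct → Oct := fun v => a * v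

/-- Right multiplication. -/
def R (a : Oct) : Oct → Oct := fun v => v * a

lemma mul_add' (a u v : Oct) : a * (u + v) = a * u + a * v := by
  ext <;> simp [mul_add, add_mul] <;> abel

lemma add_mul' (a b u : Oct) : (a + b) * u = a * u + b * u := by
  ext <;> simp [mul_add, add_mul] <;> abel

lemma mul_smul' (r : ℝ) (a u : Oct) : a * (r • u) = r • (a * u) := by
  ext <;> simp [mul_smul_comm, smul_mul_assoc, smul_sub, smul_add]

lemma smul_mul' (r : ℝ) (a u : Oct) : (r • a) * u = r • (a * u) := by
  ext <;> simp [mul_smul_comm, smul_mul_assoc, smul_sub, smul_add]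

/-- Left multiplication as a real-linear map. -/
def Llin (a : Oct) : Oct →ₗ[ℝ] Oct where
  toFun v := a * v
  map_add' u v := mul_add' a u v
  map_smul' r u := mul_smul' r a u

/-- The imaginary quaternion units. -/
def qi : ℍ[ℝ] := ⟨0, 1, 0, 0⟩
def qj : ℍ[ℝ] := ⟨0, 0, 1, 0⟩
def qk : ℍ[ℝ] := ⟨0, 0, 0, 1⟩

/-- The standard imaginary basis units of the octonions. -/
def i : Oct := ⟨qi, 0⟩
def j : Oct := ⟨qj, 0⟩
def k : Oct := ⟨qk, 0⟩
def l : Oct := ⟨0, 1⟩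
def il : Oct := ⟨0, qi⟩
def jl : Oct := ⟨0, qj⟩
def kl : Oct := ⟨0, qk⟩

/-- The standard basis of the octonions. -/
def basisSet : Set Oct := {1, i, j, k, l, il, jl, kl}

/-- The imaginary standard basis units. -/
def imSet : Set Oct := {i, j, k, l, il, jl, kl}

end Oct

set_option maxHeartbeats 1000000 in
private lemma key (a b c d : ℍ[ℝ]) (ha : a.re = 0) (hc : c.re = 0)
    (h : (a * star c + star d * b).re = 0) (v w : ℍ[ℝ]) :
    (a*(c*v - star w*d) - star (w*c + d*star v)*b
      = -(c*(a*v - star w*b) - star (w*a + b*star v)*d))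
    ∧ ((w*c + d*star v)*a + b*star (c*v - star w*d)
      = -((w*a + b*star v)*c + d*star (a*v - star w*b))) := by
  simp only [Quaternion.re_add, Quaternion.re_mul] at h
  simp only [Quaternion.re_star, Quaternion.imI_star, Quaternion.imJ_star, Quaternion.imK_star, ha, hc] at h
  constructor <;> ext <;>
    simp only [Quaternion.re_mul, Quaternion.imI_mul, Quaternion.imJ_mul, Quaternion.imK_mul,
      Quaternion.re_sub, Quaternion.imI_sub, Quaternion.imJ_sub, Quaternion.imK_sub,
      Quaternion.re_add, Quaternion.imI_add, Quaternion.imJ_add, Quaternion.imK_add,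
      Quaternion.re_neg, Quaternion.imI_neg, Quaternion.imJ_neg, Quaternion.imK_neg,
      Quaternion.re_star, Quaternion.imI_star, Quaternion.imJ_star, Quaternion.imK_star,
      ha, hc] <;>
    first
    | linear_combination (-2*v.re) * h
    | linear_combination (-2*v.imI) * h
    | linear_combination (-2*v.imJ) * h
    | linear_combination (-2*v.imK) * h
    | linear_combination (-2*w.re) * h
    | linear_combination (-2*w.imI) * h
    | linear_combination (-2*w.imJ) * h
    | linear_combination (-2*w.imK) * h

/-- For orthogonal pure imaginary octonions `p, q`, the left multiplication
operators anticommute: `L p ∘ L q = -(L q ∘ L p)`. -/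
theorem Lp_comp_Lq_anticomm (p q : Oct)
    (hp : Oct.conj p = -p) (hq : Oct.conj q = -q) (hpq : Oct.inner p q = 0) :
    Oct.L p ∘ Oct.L q = -(Oct.L q ∘ Oct.L p) := by
  have hpx : star p.x = -p.x := congrArg Oct.x hp
  have hqx : star q.x = -q.x := congrArg Oct.x hq
  have hpr : p.x.re = 0 := by
    have := congrArg QuaternionAlgebra.re hpx
    simp [Quaternion.re_star] at this; linarith
  have hqr : q.x.re = 0 := by
    have := congrArg QuaternionAlgebra.re hqx
    simp [Quaternion.re_star] at this; linarith
  have h : (p.x * star q.x + star q.y * p.y).re = 0 := by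
    have := hpq
    simp only [Oct.inner, Oct.re, Oct.conj, Oct.mul_x, star_neg, neg_neg] at this
    simpa [sub_neg_eq_add] using this
  funext v
  have K := key p.x p.y q.x q.y hpr hqr h v.x v.y
  simp only [Function.comp, Pi.neg_apply, Oct.L]
  exact Oct.ext K.1 K.2
end
end

section
/- Let p and q be orthogonal pure imaginary octonions with \(p^2 = -1\). Then \(L_p \circ (L_p \circ L_q) = -L_q\) and \((L_p \circ L_q) \circ L_p = L_q\) as linear maps on the octonions. -/
noncomputable section
open Quaternion

namespace Oct

lemma alt (a v : Oct) (ha : star a.x = -a.x) : a * (a * v) = (a * a) * v := by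
  have hre : a.x.re = 0 := by
    have := congrArg QuaternionAlgebra.re ha
    simp at this; linarith
  ext <;>
  · simp only [mul_x, mul_y, sub_x, sub_y, add_x, add_y, Quaternion.re_mul, Quaternion.imI_mul,
      Quaternion.imJ_mul, Quaternion.imK_mul, Quaternion.re_sub, Quaternion.imI_sub,
      Quaternion.imJ_sub, Quaternion.imK_sub, Quaternion.re_add, Quaternion.imI_add,
      Quaternion.imJ_add, Quaternion.imK_add, Quaternion.re_star, Quaternion.imI_star,
      Quaternion.imJ_star, Quaternion.imK_star, hre]
    ring

lemma zero_mul' (v : Oct) : (0 : Oct) * v = 0 := by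
  ext <;> simp

lemma neg_one_mul' (v : Oct) : (-1 : Oct) * v = -v := by
  ext <;> simp

lemma neg_mul'' (a v : Oct) : (-a) * v = -(a * v) := by
  ext <;> simp <;> ring

lemma mul_neg'' (a v : Oct) : a * (-v) = -(a * v) := by
  ext <;> simp <;> ring

lemma anticomm (a b v : Oct) (ha : star a.x = -a.x) (hb : star b.x = -b.x) :
    a * (b * v) + b * (a * v) = (a * b + b * a) * v := by
  have h := alt (a + b) v (by simp [ha, hb]; abel)
  have h1 := alt a v ha
  have h2 := alt b v hb
  simp only [mul_add', add_mul'] at h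
  have : a * (b * v) + b * (a * v) = (a*b)*v + (b*a)*v := by
    have := h
    rw [h1, h2] at this
    abel_nf at this ⊢
    linear_combination (norm := abel) this
  rw [this, ← add_mul']

lemma pq_qp (p q : Oct) (hp : Oct.conj p = -p) (hq : Oct.conj q = -q)
    (hpq : Oct.inner p q = 0) : p * q + q * p = 0 := by
  have hpre : star p.x = -p.x := congrArg Oct.x hp
  have hqre : star q.x = -q.x := congrArg Oct.x hq
  have hp0 : p.x.re = 0 := by have := congrArg QuaternionAlgebra.re hpre; simp at this; linarith
  have hq0 : q.x.re = 0 := by have := congrArg QuaternionAlgebra.re hqre; simp at this; linarith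
  unfold Oct.inner Oct.re Oct.conj at hpq
  simp only [mul_x, Quaternion.re_sub, Quaternion.re_mul, Quaternion.re_star, Quaternion.imI_star,
    Quaternion.imJ_star, Quaternion.imK_star, neg_y, neg_x, Quaternion.re_neg, Quaternion.imI_neg,
    Quaternion.imJ_neg, Quaternion.imK_neg, hp0, hq0] at hpq
  ext <;>
  · simp only [mul_x, mul_y, add_x, add_y, sub_x, sub_y, zero_x, zero_y, Quaternion.re_mul,
      Quaternion.imI_mul, Quaternion.imJ_mul, Quaternion.imK_mul, Quaternion.re_sub,
      Quaternion.imI_sub, Quaternion.imJ_sub, Quaternion.imK_sub, Quaternion.re_add,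
      Quaternion.imI_add, Quaternion.imJ_add, Quaternion.imK_add, Quaternion.re_star,
      Quaternion.imI_star, Quaternion.imJ_star, Quaternion.imK_star, Quaternion.re_zero,
      Quaternion.imI_zero, Quaternion.imJ_zero, Quaternion.imK_zero, hp0, hq0]
    linarith [hpq]

end Oct

/-- For orthogonal pure imaginary octonions `p, q` with `p² = -1`, we have
`L p ∘ (L p ∘ L q) = -L q` and `(L p ∘ L q) ∘ L p = L q`. -/
theorem Lp_Lp_Lq (p q : Oct)
    (hp : Oct.conj p = -p) (hq : Oct.conj q = -q) (hpq : Oct.inner p q = 0)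
    (hp2 : p * p = -1) :
    Oct.L p ∘ (Oct.L p ∘ Oct.L q) = -(Oct.L q) ∧
      (Oct.L p ∘ Oct.L q) ∘ Oct.L p = Oct.L q := by
  have hpx : star p.x = -p.x := congrArg Oct.x hp
  have hqx : star q.x = -q.x := congrArg Oct.x hq
  constructor
  · funext v
    simp only [Function.comp_apply, Oct.L, Pi.neg_apply]
    rw [Oct.alt p (q * v) hpx, hp2, Oct.neg_one_mul']
  · funext v
    simp only [Function.comp_apply, Oct.L]
    have h := Oct.anticomm p q (p * v) hpx hqx
    rw [Oct.pq_qp p q hp hq hpq, Oct.alt p v hpx, hp2, Oct.neg_one_mul',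
      Oct.mul_neg'', Oct.zero_mul'] at h
    rwa [add_neg_eq_zero] at h
end
end

section
/- Let p, q, r be mutually orthogonal pure imaginary octonions. Then the commutator of left multiplications satisfies \([L_r, L_p \circ L_q] = 0\), i.e. \(L_r \circ L_p \circ L_q = L_p \circ L_q \circ L_r\) as linear maps on the octonions. -/
noncomputable section
open Quaternion

set_option maxHeartbeats 1000000 in
lemma key_s3 (a b v : Oct) (ha : Oct.conj a = -a) (hb : Oct.conj b = -b)
    (h : Oct.inner a b = 0) : a*(b*v) + b*(a*v) = 0 := by
  have ha1 : a.x.re = 0 := by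
    have := congrArg (fun o => o.x.re) ha; simp [Oct.conj] at this; linarith
  have hb1 : b.x.re = 0 := by
    have := congrArg (fun o => o.x.re) hb; simp [Oct.conj] at this; linarith
  clear ha hb
  obtain ⟨ax, ay⟩ := a
  obtain ⟨bx, b_y⟩ := b
  obtain ⟨vx, vy⟩ := v
  simp only at ha1 hb1
  simp [Oct.inner, Oct.re, Oct.conj, Quaternion.re_mul, ha1, hb1] at h
  ext <;> simp [Quaternion.ext_iff, Quaternion.re_mul, Quaternion.imI_mul, Quaternion.imJ_mul, Quaternion.imK_mul, ha1, hb1] <;> (first | linear_combination ((-2)*vx.re)*h | linear_combination (2*vx.re)*h | linear_combination ((-2)*vx.imI)*h | linear_combination (2*vx.imI)*h | linear_combination ((-2)*vx.imJ)*h | linear_combination (2*vx.imJ)*h | linear_combination ((-2)*vx.imK)*h | linear_combination (2*vx.imK)*h | linear_combination ((-2)*vy.re)*h | linear_combination (2*vy.re)*h | linear_combination ((-2)*vy.imI)*h | linear_combination (2*vy.imI)*h | linear_combination ((-2)*vy.imJ)*h | linear_combination (2*vy.imJ)*h | linear_combination ((-2)*vy.imK)*h | linear_combination (2*vy.imK)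*h)

lemma inner_comm' (a b : Oct) : Oct.inner a b = Oct.inner b a := by
  obtain ⟨ax, ay⟩ := a
  obtain ⟨bx, b_y⟩ := b
  simp [Oct.inner, Oct.re, Oct.conj, Quaternion.re_mul]
  ring

lemma mul_neg'' (a w : Oct) : a * (-w) = -(a * w) := by
  ext <;> simp [mul_comm] <;> ring

/-- For mutually orthogonal pure imaginary octonions `p, q, r`, the operator
`L r` commutes with `L p ∘ L q`. -/
theorem Lr_commutes_LpLq (p q r : Oct)
    (hp : Oct.conj p = -p) (hq : Oct.conj q = -q) (hr : Oct.conj r = -r)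
    (hpq : Oct.inner p q = 0) (hpr : Oct.inner p r = 0) (hqr : Oct.inner q r = 0) :
    Oct.L r ∘ (Oct.L p ∘ Oct.L q) = (Oct.L p ∘ Oct.L q) ∘ Oct.L r := by
  funext v
  simp only [Function.comp, Oct.L]
  have h1 : r * (p * (q * v)) = -(p * (r * (q * v))) :=
    eq_neg_of_add_eq_zero_left (key_s3 r p (q * v) hr hp (by rw [inner_comm']; exact hpr))
  have h2 : r * (q * v) = -(q * (r * v)) :=
    eq_neg_of_add_eq_zero_left (key_s3 r q v hr hq (by rw [inner_comm']; exact hqr))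
  rw [h1, h2, mul_neg'', neg_neg]
end
end

section
/- Let p, q, r, s be mutually orthogonal pure imaginary octonions with \(p^2 = -1\). Then \([L_r \circ L_p, L_p \circ L_q] = -2\, L_r \circ L_q\) as linear maps on the octonions. -/
noncomputable section
open Quaternion

namespace OctAux

open Oct

lemma mul_neg' (a u : Oct) : a * (-u) = -(a * u) := by
  ext <;> simp <;> ring

lemma neg_one_mul' (u : Oct) : (-1 : Oct) * u = -u := by
  ext <;> simp

set_option maxHeartbeats 1000000 in
/-- Linearized alternativity in the Cayley–Dickson double of the quaternions. -/
lemma lin_alt (a b v : Oct) : a * (b * v) + b * (a * v) = (a * b + b * a) * v := by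
  ext <;>
    simp [Quaternion.re_mul, Quaternion.imI_mul, Quaternion.imJ_mul, Quaternion.imK_mul] <;>
    ring

lemma pure_re (a : Oct) (ha : Oct.conj a = -a) : a.x.re = 0 := by
  have h : star a.x = -a.x := congrArg Oct.x ha
  have := congrArg QuaternionAlgebra.re h
  simp at this
  linarith

/-- Orthogonal pure imaginary octonions anticommute. -/
lemma anti (a b : Oct) (ha : Oct.conj a = -a) (hb : Oct.conj b = -b)
    (hab : Oct.inner a b = 0) : a * b + b * a = 0 := by
  have ha' := pure_re a ha
  have hb' := pure_re b hb
  unfold Oct.inner Oct.re Oct.conj at hab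
  simp [Quaternion.re_mul, ha', hb'] at hab
  ext <;>
    simp [Quaternion.re_mul, Quaternion.imI_mul, Quaternion.imJ_mul, Quaternion.imK_mul,
      ha', hb'] <;>
    first | ring1 | linear_combination (-2 : ℝ) * hab

lemma anti' (a b : Oct) (ha : Oct.conj a = -a) (hb : Oct.conj b = -b)
    (hab : Oct.inner a b = 0) (v : Oct) : a * (b * v) = -(b * (a * v)) := by
  have h := lin_alt a b v
  rw [anti a b ha hb hab] at h
  have h0 : (0 : Oct) * v = 0 := by ext <;> simp
  rw [h0] at h
  linear_combination (norm := abel) h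

set_option maxHeartbeats 1000000 in
lemma sq_mul (a v : Oct) : a * (a * v) = (a * a) * v := by
  ext <;>
    simp [Quaternion.re_mul, Quaternion.imI_mul, Quaternion.imJ_mul, Quaternion.imK_mul] <;>
    ring

end OctAux

/-- For mutually orthogonal pure imaginary octonions `p, q, r, s` with `p² = -1`,
`[L r ∘ L p, L p ∘ L q] = -2 (L r ∘ L q)`. -/
theorem comm_LrLp_LpLq (p q r s : Oct)
    (hp : Oct.conj p = -p) (hq : Oct.conj q = -q) (hr : Oct.conj r = -r)
    (hs : Oct.conj s = -s)
    (hpq : Oct.inner p q = 0) (hpr : Oct.inner p r = 0) (hps : Oct.inner p s = 0)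
    (hqr : Oct.inner q r = 0) (hqs : Oct.inner q s = 0) (hrs : Oct.inner r s = 0)
    (hp2 : p * p = -1) :
    (Oct.L r ∘ Oct.L p) ∘ (Oct.L p ∘ Oct.L q)
        - (Oct.L p ∘ Oct.L q) ∘ (Oct.L r ∘ Oct.L p)
      = (-2 : ℝ) • (Oct.L r ∘ Oct.L q) := by
  funext v
  simp only [Function.comp_apply, Pi.sub_apply, Pi.smul_apply, Oct.L]
  have hP : ∀ w : Oct, p * (p * w) = -w := by
    intro w
    rw [OctAux.sq_mul, hp2, OctAux.neg_one_mul']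
  have hQP : ∀ w : Oct, q * (p * w) = -(p * (q * w)) := by
    intro w
    have := OctAux.anti' p q hp hq hpq w
    linear_combination (norm := abel) this
  have h1 : r * (p * (p * (q * v))) = -(r * (q * v)) := by
    rw [hP (q * v), OctAux.mul_neg']
  have h2 : p * (q * (r * (p * v))) = r * (q * v) := by
    rw [OctAux.anti' q r hq hr hqr (p * v), OctAux.mul_neg',
      OctAux.anti' p r hp hr hpr (q * (p * v)), neg_neg,
      hQP v, OctAux.mul_neg', hP (q * v), neg_neg]
  rw [h1, h2]
  generalize r * (q * v) = u
  ext <;> simp <;> ring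
end
end

section
/- In the octonions with standard basis \(1, i, j, k, \ell, i\ell, j\ell, k\ell\), the left multiplication operator by \(\ell\) satisfies \(L_\ell = \tfrac{1}{2}\,(-R_\ell + R_i \circ R_{i\ell} + R_j \circ R_{j\ell} + R_k \circ R_{k\ell})\), where composition \(R_a \circ R_b\) means \(x \mapsto (xb)a\). -/
noncomputable section
open Quaternion

open Oct in
/-- `L ℓ = ½ (-R ℓ + R i ∘ R iℓ + R j ∘ R jℓ + R k ∘ R kℓ)`. -/
theorem Ll_eq_right_mults :
    L l = ((1 : ℝ)/2) • (-(R l) + R i ∘ R il + R j ∘ R jl + R k ∘ R kl) := by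
  funext v
  ext <;> (simp [L, R, i, j, k, l, il, jl, kl, Function.comp,
    QuaternionAlgebra.ext_iff, QuaternionAlgebra.re_mul, QuaternionAlgebra.imI_mul,
    QuaternionAlgebra.imJ_mul, QuaternionAlgebra.imK_mul] <;> simp [qi, qj, qk]) <;> ring
end
end

section
/- In the octonions, \(L_i \circ L_{i\ell} = \tfrac{1}{2}\,(-R_\ell + R_i\circ R_{i\ell} - R_j\circ R_{j\ell} - R_k\circ R_{k\ell})\) as linear maps, where \(1,i,j,k,\ell,i\ell,j\ell,k\ell\) is the standard basis. -/
noncomputable section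
open Quaternion

open Oct in
/-- `L i ∘ L iℓ = ½ (-R ℓ + R i ∘ R iℓ - R j ∘ R jℓ - R k ∘ R kℓ)`. -/
theorem Li_Lil_eq_right_mults :
    L i ∘ L il
      = ((1 : ℝ)/2) • (-(R l) + R i ∘ R il - R j ∘ R jl - R k ∘ R kl) := by
  funext v
  obtain ⟨x, y⟩ := v
  show _ = ((1:ℝ)/2) • (_ : Oct)
  simp only [L, R, i, j, k, l, il, jl, kl, Function.comp, Pi.smul_apply,
    Pi.add_apply, Pi.sub_apply, Pi.neg_apply]
  ext <;>
  simp [Quaternion.ext_iff, QuaternionAlgebra.ext_iff, Quaternion.re_mul,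
    Quaternion.imI_mul, Quaternion.imJ_mul, Quaternion.imK_mul] <;>
  simp [qi, qj, qk] <;>
  ring
end
end
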